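/- arXiv:2404.05033 — 2 statements merged into one kernel-verified Lean document; each statement's English description precedes it below -/
import Mathlib

section
/- For any distinct i, j, k ∈ {1,2,3}, letting L̂ be the subgroup of B generated by {eᵢ, mⱼ, mₖ, s⁽²⁾ᵢⱼ, s⁽²⁾ᵢₖ}, the map ψ maps L̂ onto L̂; i.e. the T-domain wall s⁽³⁾₁,₂,₃ condenses on the (eᵢ, mⱼ, mₖ)-boundary. -/
/-- The group of excitations and codimension-2 domain walls of three copies of
the 3D toric code: triples (a, b, s) in `(ZMod 2)³ × (ZMod 2)³ × (ZMod 2)³`. -/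
abbrev B : Type := (Fin 3 → ZMod 2) × (Fin 3 → ZMod 2) × (Fin 3 → ZMod 2)

/-- The electric charge `eᵢ`. -/
def e (i : Fin 3) : B := (Pi.single i 1, 0, 0)

/-- The magnetic flux `mᵢ`. -/
def m (i : Fin 3) : B := (0, Pi.single i 1, 0)

/-- The S-domain wall `s⁽²⁾ⱼₖ`, labelled by the complementary index `i`
(that is, `s2 i = s⁽²⁾ⱼₖ` for `{i,j,k} = {1,2,3}`). -/
def s2 (i : Fin 3) : B := (0, 0, Pi.single i 1)

/-- The action of sweeping the T-domain wall `s⁽³⁾₁,₂,₃`: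
`(a, b, s) ↦ (a, b, s + b)`, i.e. `mᵢ ↦ mᵢ + s⁽²⁾ⱼₖ`. -/
def ψ (x : B) : B := (x.1, x.2.1, x.2.2 + x.2.1)

/-- `ψ` as an additive group homomorphism. -/
def ψhom : B →+ B where
  toFun := ψ
  map_zero' := by simp [ψ]
  map_add' x y := by
    simp only [ψ, Prod.fst_add, Prod.snd_add, Prod.mk_add_mk, Prod.mk.injEq]
    refine ⟨trivial, trivial, ?_⟩
    abel

theorem stmt_16 (i j k : Fin 3) (hij : i ≠ j) (hjk : j ≠ k) (hik : i ≠ k) :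
    ψ '' ((AddSubgroup.closure {e i, m j, m k, s2 k, s2 j} : AddSubgroup B) : Set B) =
      ((AddSubgroup.closure {e i, m j, m k, s2 k, s2 j} : AddSubgroup B) : Set B) := by
  set S : Set B := {e i, m j, m k, s2 k, s2 j} with hS
  have hψe : ∀ t, ψ (e t) = e t := by intro t; simp [ψ, e]
  have hψs : ∀ t, ψ (s2 t) = s2 t := by intro t; simp [ψ, s2]
  have hψm : ∀ t, ψ (m t) = m t + s2 t := by
    intro t; simp [ψ, m, s2, Prod.ext_iff]
  have himg : ψ '' ((AddSubgroup.closure S : AddSubgroup B) : Set B) =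
      ((AddSubgroup.map ψhom (AddSubgroup.closure S) : AddSubgroup B) : Set B) := rfl
  rw [himg, AddMonoidHom.map_closure]
  congr 1
  apply le_antisymm
  · apply AddSubgroup.closure_le _ |>.mpr
    rintro x ⟨y, hy, rfl⟩
    rcases hy with rfl | rfl | rfl | rfl | rfl
    · rw [show ψhom (e i) = e i from hψe i]
      exact AddSubgroup.subset_closure (by simp [hS])
    · rw [show ψhom (m j) = m j + s2 j from hψm j]
      exact add_mem (AddSubgroup.subset_closure (by simp [hS]))
        (AddSubgroup.subset_closure (by simp [hS]))
    · rw [show ψhom (m k) = m k + s2 k from hψm k]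
      exact add_mem (AddSubgroup.subset_closure (by simp [hS]))
        (AddSubgroup.subset_closure (by simp [hS]))
    · rw [show ψhom (s2 k) = s2 k from hψs k]
      exact AddSubgroup.subset_closure (by simp [hS])
    · rw [show ψhom (s2 j) = s2 j from hψs j]
      exact AddSubgroup.subset_closure (by simp [hS])
  · apply AddSubgroup.closure_le _ |>.mpr
    have mem : ∀ x ∈ S, x ∈ AddSubgroup.closure (ψhom '' S) := by
      intro x hx
      have hL : ∀ y ∈ S, ψhom y ∈ AddSubgroup.closure (ψhom '' S) := fun y hy =>
        AddSubgroup.subset_closure ⟨y, hy, rfl⟩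
      rcases hx with rfl | rfl | rfl | rfl | rfl
      · have := hL (e i) (by simp [hS]); rwa [show ψhom (e i) = e i from hψe i] at this
      · have h1 := hL (m j) (by simp [hS])
        have h2 := hL (s2 j) (by simp [hS])
        rw [show ψhom (m j) = m j + s2 j from hψm j] at h1
        rw [show ψhom (s2 j) = s2 j from hψs j] at h2
        have := AddSubgroup.sub_mem _ h1 h2
        simpa using this
      · have h1 := hL (m k) (by simp [hS])
        have h2 := hL (s2 k) (by simp [hS])
        rw [show ψhom (m k) = m k + s2 k from hψm k] at h1
        rw [show ψhom (s2 k) = s2 k from hψs k] at h2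
        have := AddSubgroup.sub_mem _ h1 h2
        simpa using this
      · have := hL (s2 k) (by simp [hS]); rwa [show ψhom (s2 k) = s2 k from hψs k] at this
      · have := hL (s2 j) (by simp [hS]); rwa [show ψhom (s2 j) = s2 j from hψs j] at this
    exact mem
end

section
/- The map ψ maps onto itself the subgroup of B generated by {e₁ + e₂, e₂ + e₃, m₁ + m₂ + m₃, s⁽²⁾₂₃, s⁽²⁾₃₁, s⁽²⁾₁₂}, and also maps onto itself the subgroup generated by {m₁ + m₂, m₂ + m₃, e₁ + e₂ + e₃, s⁽²⁾₂₃ + s⁽²⁾₃₁, s⁽²⁾₃₁ + s⁽²⁾₁₂}; i.e. the T-domain wall condenses on both the m₁m₂m₃-boundary and the e₁e₂e₃-boundary (the latter augmented by its condensing composite S-walls). -/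
def ψHom : B →+ B where
  toFun := ψ
  map_zero' := rfl
  map_add' x y := by
    refine Prod.ext rfl (Prod.ext rfl ?_)
    show (x.2.2 + y.2.2) + (x.2.1 + y.2.1) = (x.2.2 + x.2.1) + (y.2.2 + y.2.1)
    abel

lemma ψ_add (x y : B) : ψ (x + y) = ψ x + ψ y := ψHom.map_add x y

lemma ψ_inv : Function.Involutive ψ := by
  intro x
  show (x.1, x.2.1, x.2.2 + x.2.1 + x.2.1) = x
  have : x.2.2 + x.2.1 + x.2.1 = x.2.2 := by
    rw [add_assoc]
    have h : x.2.1 + x.2.1 = 0 := funext fun i => CharTwo.add_self_eq_zero _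
    rw [h, add_zero]
  rw [this]

lemma key (S : Set B) (h : ∀ x ∈ S, ψ x ∈ AddSubgroup.closure S) :
    ψ '' ((AddSubgroup.closure S : AddSubgroup B) : Set B) =
      ((AddSubgroup.closure S : AddSubgroup B) : Set B) := by
  have hsub : ψ '' ((AddSubgroup.closure S : AddSubgroup B) : Set B)
      ⊆ ((AddSubgroup.closure S : AddSubgroup B) : Set B) := by
    have hmap : AddSubgroup.map ψHom (AddSubgroup.closure S) ≤ AddSubgroup.closure S := by
      rw [AddSubgroup.map_le_iff_le_comap, AddSubgroup.closure_le]
      intro y hy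
      exact h y hy
    exact fun x hx => hmap hx
  refine Set.Subset.antisymm hsub fun x hx => ⟨ψ x, hsub ⟨x, hx, rfl⟩, ψ_inv x⟩

theorem stmt_18 :
    ψ '' ((AddSubgroup.closure
        {e 0 + e 1, e 1 + e 2, m 0 + m 1 + m 2, s2 0, s2 1, s2 2} :
        AddSubgroup B) : Set B) =
      ((AddSubgroup.closure
        {e 0 + e 1, e 1 + e 2, m 0 + m 1 + m 2, s2 0, s2 1, s2 2} :
        AddSubgroup B) : Set B) ∧
    ψ '' ((AddSubgroup.closure
        {m 0 + m 1, m 1 + m 2, e 0 + e 1 + e 2, s2 0 + s2 1, s2 1 + s2 2} :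
        AddSubgroup B) : Set B) =
      ((AddSubgroup.closure
        {m 0 + m 1, m 1 + m 2, e 0 + e 1 + e 2, s2 0 + s2 1, s2 1 + s2 2} :
        AddSubgroup B) : Set B) := by
  have he : ∀ i, ψ (e i) = e i := fun i => by simp [ψ, e]
  have hs : ∀ i, ψ (s2 i) = s2 i := fun i => by simp [ψ, s2]
  have hm : ∀ i, ψ (m i) = m i + s2 i := fun i => by simp [ψ, m, s2, Prod.ext_iff]
  constructor
  · refine key _ fun x hx => ?_
    have g : ∀ y ∈ ({e 0 + e 1, e 1 + e 2, m 0 + m 1 + m 2, s2 0, s2 1, s2 2} : Set B),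
        y ∈ AddSubgroup.closure ({e 0 + e 1, e 1 + e 2, m 0 + m 1 + m 2, s2 0, s2 1, s2 2} : Set B) :=
      fun y hy => AddSubgroup.subset_closure hy
    simp only [Set.mem_insert_iff, Set.mem_singleton_iff] at hx
    rcases hx with h|h|h|h|h|h <;> subst h
    · rw [ψ_add, he, he]; exact g _ (by simp)
    · rw [ψ_add, he, he]; exact g _ (by simp)
    · rw [ψ_add, ψ_add, hm, hm, hm]
      have h1 := g (m 0 + m 1 + m 2) (by simp)
      have h2 := g (s2 0) (by simp)
      have h3 := g (s2 1) (by simp)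
      have h4 := g (s2 2) (by simp)
      have := add_mem (add_mem (add_mem h1 h2) h3) h4
      convert this using 1
      abel
    · rw [hs]; exact g _ (by simp)
    · rw [hs]; exact g _ (by simp)
    · rw [hs]; exact g _ (by simp)
  · refine key _ fun x hx => ?_
    have g : ∀ y ∈ ({m 0 + m 1, m 1 + m 2, e 0 + e 1 + e 2, s2 0 + s2 1, s2 1 + s2 2} : Set B),
        y ∈ AddSubgroup.closure ({m 0 + m 1, m 1 + m 2, e 0 + e 1 + e 2, s2 0 + s2 1, s2 1 + s2 2} : Set B) :=
      fun y hy => AddSubgroup.subset_closure hy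
    simp only [Set.mem_insert_iff, Set.mem_singleton_iff] at hx
    rcases hx with h|h|h|h|h <;> subst h
    · rw [ψ_add, hm, hm]
      have h1 := g (m 0 + m 1) (by simp)
      have h2 := g (s2 0 + s2 1) (by simp)
      have := add_mem h1 h2
      convert this using 1
      abel
    · rw [ψ_add, hm, hm]
      have h1 := g (m 1 + m 2) (by simp)
      have h2 := g (s2 1 + s2 2) (by simp)
      have := add_mem h1 h2
      convert this using 1
      abel
    · rw [ψ_add, ψ_add, he, he, he]; exact g _ (by simp)
    · rw [ψ_add, hs, hs]; exact g _ (by simp)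
    · rw [ψ_add, hs, hs]; exact g _ (by simp)
end
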